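/- A finite abelian group is filled if and only if it is cyclic of order 3, cyclic of order 5, or an elementary abelian 2-group. -/

import Mathlib

open Pointwise

/-- `S` is product-free if `S ∩ SS = ∅`. -/
def ProductFree {G : Type*} [Group G] (S : Set G) : Prop :=
  Disjoint S (S * S)

/-- `S` is locally maximal product-free if it is product-free and not properly
contained in any product-free set. -/
def LocallyMaximalPF {G : Type*} [Group G] (S : Set G) : Prop :=
  ProductFree S ∧ ∀ T : Set G, ProductFree T → S ⊆ T → S = T

/-- `S` fills `G` (is complete) if every non-identity element lies in `S ∪ SS`. -/
def Fills {G : Type*} [Group G] (S : Set G) : Prop :=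
  ∀ g : G, g ≠ 1 → g ∈ S ∪ S * S

/-- `G` is filled if every locally maximal product-free set fills `G`. -/
def Filled (G : Type*) [Group G] : Prop :=
  ∀ S : Set G, LocallyMaximalPF S → Fills S

section Aux

variable {G : Type*} [Group G]

lemma productFree_iff {S : Set G} :
    ProductFree S ↔ ∀ a ∈ S, ∀ b ∈ S, a * b ∉ S := by
  constructor
  · intro h a ha b hb hab
    exact Set.disjoint_left.mp h hab (Set.mul_mem_mul ha hb)
  · intro h
    rw [ProductFree, Set.disjoint_left]
    rintro x hx ⟨a, ha, b, hb, rfl⟩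
    exact h a ha b hb hx

lemma productFree_mono {S T : Set G} (h : T ⊆ S) (hS : ProductFree S) : ProductFree T :=
  Disjoint.mono h (Set.mul_subset_mul h h) hS

lemma locallyMaximalPF_iff {S : Set G} :
    LocallyMaximalPF S ↔ ProductFree S ∧ ∀ g ∉ S, ¬ ProductFree (insert g S) := by
  constructor
  · rintro ⟨hPF, hmax⟩
    refine ⟨hPF, fun g hg hPF' => hg ?_⟩
    have h := hmax _ hPF' (Set.subset_insert g S)
    rw [h]
    exact Set.mem_insert g S
  · rintro ⟨hPF, h⟩
    refine ⟨hPF, fun T hT hST => ?_⟩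
    by_contra hne
    obtain ⟨g, hgT, hgS⟩ := Set.not_subset.mp
      (fun hsub => hne (Set.Subset.antisymm hST hsub))
    exact h g hgS (productFree_mono (Set.insert_subset hgT hST) hT)

lemma one_not_mem_of_productFree {S : Set G} (hS : ProductFree S) : (1 : G) ∉ S :=
  fun h => productFree_iff.mp hS 1 h 1 h (by simpa)

/-- Filled passes to targets of surjective homomorphisms. -/
lemma filled_of_surjective {H : Type*} [Group H] (φ : G →* H)
    (hφ : Function.Surjective φ) (hG : Filled G) : Filled H := by
  intro T hT
  rcases Set.eq_empty_or_nonempty T with rfl | ⟨t0, ht0⟩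
  · -- empty locally maximal set forces the group to be trivial
    intro h hne
    exfalso
    have hPF : ProductFree {h} := by
      rw [productFree_iff]
      intro x hx y hy hxy
      rw [Set.mem_singleton_iff] at hx hy hxy
      subst hx; subst hy
      exact hne (mul_eq_left.mp hxy)
    have h0 := hT.2 {h} hPF (Set.empty_subset _)
    exact Set.singleton_ne_empty h h0.symm
  · set S : Set G := φ ⁻¹' T with hSdef
    have hTPF := hT.1
    have hSPF : ProductFree S := by
      rw [productFree_iff]
      intro x hx y hy hxy
      exact productFree_iff.mp hTPF _ hx _ hy (by rw [← map_mul]; exact hxy)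
    have hSmax : ∀ g ∉ S, ¬ ProductFree (insert g S) := by
      intro g hg hbad
      have hgT : φ g ∉ T := hg
      have hnot := (locallyMaximalPF_iff.mp hT).2 (φ g) hgT
      rw [productFree_iff] at hnot
      push_neg at hnot
      obtain ⟨x, hx, y, hy, hxy⟩ := hnot
      rw [productFree_iff] at hbad
      rw [Set.mem_insert_iff] at hx hy hxy
      rcases hx with rfl | hx
      · rcases hy with rfl | hy
        · rcases hxy with hxy | hxy
          · -- φg * φg = φg, so φ g = 1, use t0
            have h1 : φ g = 1 := by
              have := hxy
              rwa [mul_eq_left] at this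
            obtain ⟨s0, hs0⟩ := hφ t0
            have hs0S : s0 ∈ S := by rw [hSdef, Set.mem_preimage, hs0]; exact ht0
            have : g * s0 ∈ S := by
              rw [hSdef, Set.mem_preimage, map_mul, h1, one_mul, hs0]; exact ht0
            exact hbad g (Set.mem_insert _ _) s0 (Set.mem_insert_of_mem _ hs0S)
              (Set.mem_insert_of_mem _ this)
          · -- g*g lands in S
            have : g * g ∈ S := by rw [hSdef, Set.mem_preimage, map_mul]; exact hxy
            exact hbad g (Set.mem_insert _ _) g (Set.mem_insert _ _)
              (Set.mem_insert_of_mem _ this)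
        · rcases hxy with hxy | hxy
          · -- φg * y = φg with y ∈ T gives 1 ∈ T
            have h1 : y = 1 := mul_eq_left.mp hxy
            exact absurd (h1 ▸ hy) (one_not_mem_of_productFree hTPF)
          · -- g * s2 ∈ S
            obtain ⟨s2, hs2⟩ := hφ y
            have hs2S : s2 ∈ S := by rw [hSdef, Set.mem_preimage, hs2]; exact hy
            have : g * s2 ∈ S := by rw [hSdef, Set.mem_preimage, map_mul, hs2]; exact hxy
            exact hbad g (Set.mem_insert _ _) s2 (Set.mem_insert_of_mem _ hs2S)
              (Set.mem_insert_of_mem _ this)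
      · rcases hy with rfl | hy
        · rcases hxy with hxy | hxy
          · -- x * φg = φg gives 1 ∈ T
            have h1 : x = 1 := mul_eq_right.mp hxy
            exact absurd (h1 ▸ hx) (one_not_mem_of_productFree hTPF)
          · -- s1 * g ∈ S
            obtain ⟨s1, hs1⟩ := hφ x
            have hs1S : s1 ∈ S := by rw [hSdef, Set.mem_preimage, hs1]; exact hx
            have : s1 * g ∈ S := by rw [hSdef, Set.mem_preimage, map_mul, hs1]; exact hxy
            exact hbad s1 (Set.mem_insert_of_mem _ hs1S) g (Set.mem_insert _ _)
              (Set.mem_insert_of_mem _ this)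
        · rcases hxy with hxy | hxy
          · -- x * y = φ g : pick s1 preimage of x, s2 := s1⁻¹ * g
            obtain ⟨s1, hs1⟩ := hφ x
            have hs1S : s1 ∈ S := by rw [hSdef, Set.mem_preimage, hs1]; exact hx
            have hs2S : s1⁻¹ * g ∈ S := by
              rw [hSdef, Set.mem_preimage, map_mul, map_inv, hs1]
              have : y = x⁻¹ * φ g := by rw [← hxy]; group
              rw [← this]; exact hy
            have hmul : s1 * (s1⁻¹ * g) = g := by group
            exact hbad s1 (Set.mem_insert_of_mem _ hs1S) (s1⁻¹ * g)
              (Set.mem_insert_of_mem _ hs2S) (by rw [hmul]; exact Set.mem_insert _ _)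
          · exact productFree_iff.mp hTPF x hx y hy hxy
    have hSfills := hG S (locallyMaximalPF_iff.mpr ⟨hSPF, hSmax⟩)
    intro h hne
    obtain ⟨g, rfl⟩ := hφ h
    have hg1 : g ≠ 1 := fun hh => hne (by rw [hh, map_one])
    rcases hSfills g hg1 with hgS | hgSS
    · exact Or.inl hgS
    · obtain ⟨x, hx, y, hy, rfl⟩ := hgSS
      exact Or.inr (by rw [map_mul]; exact Set.mul_mem_mul hx hy)

/-- Bridge: locally maximal PF + non-filling finite witness refutes Filled. -/
lemma not_filled_of_witness [DecidableEq G] (W : Finset G) (g0 : G)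
    (h1 : ∀ a ∈ W, ∀ b ∈ W, a * b ∉ W)
    (h2 : ∀ g : G, g ∉ W → ∃ a ∈ insert g W, ∃ b ∈ insert g W, a * b ∈ insert g W)
    (h3a : g0 ∉ W) (h3b : ¬ g0 = 1)
    (h3c : ∀ a ∈ W, ∀ b ∈ W, ¬ a * b = g0) :
    ¬ Filled G := by
  intro hF
  have hg0W := h3a; have hg01 := h3b; have hg0P := h3c
  have hPF : ProductFree (↑W : Set G) := by
    rw [productFree_iff]
    intro a ha b hb hab
    exact h1 a (by exact_mod_cast ha) b (by exact_mod_cast hb) (by exact_mod_cast hab)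
  have hmax : ∀ g ∉ (↑W : Set G), ¬ ProductFree (insert g (↑W : Set G)) := by
    intro g hg hbad
    obtain ⟨a, ha, b, hb, hab⟩ := h2 g (by exact_mod_cast hg)
    rw [productFree_iff] at hbad
    refine hbad a ?_ b ?_ ?_
    · rw [← Finset.coe_insert]; exact_mod_cast ha
    · rw [← Finset.coe_insert]; exact_mod_cast hb
    · rw [← Finset.coe_insert]; exact_mod_cast hab
  have hfills := hF _ (locallyMaximalPF_iff.mpr ⟨hPF, hmax⟩) g0 hg01
  rcases hfills with h | h
  · exact hg0W (by exact_mod_cast h)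
  · obtain ⟨a, ha, b, hb, hab⟩ := h
    exact hg0P a (by exact_mod_cast ha) b (by exact_mod_cast hb) hab

/-- Bridge: a finite decidable check implies Filled. -/
lemma filled_of_finset_check [Fintype G] [DecidableEq G]
    (h : ∀ W : Finset G, ¬ (∀ a ∈ W, ∀ b ∈ W, a * b ∉ W) ∨
        ¬ (∀ g : G, g ∉ W → ∃ a ∈ insert g W, ∃ b ∈ insert g W, a * b ∈ insert g W) ∨
        ∀ g : G, g ≠ 1 → (g ∈ W ∨ ∃ a ∈ W, ∃ b ∈ W, a * b = g)) :
    Filled G := by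
  intro S hS g hg
  have hfin : S.Finite := Set.toFinite S
  set W : Finset G := hfin.toFinset with hW
  have hmem : ∀ x, x ∈ W ↔ x ∈ S := fun x => Set.Finite.mem_toFinset hfin
  have hc1 : ∀ a ∈ W, ∀ b ∈ W, a * b ∉ W := by
    intro a ha b hb hab
    exact productFree_iff.mp hS.1 a ((hmem a).mp ha) b ((hmem b).mp hb) ((hmem _).mp hab)
  have hc2 : ∀ g : G, g ∉ W → ∃ a ∈ insert g W, ∃ b ∈ insert g W, a * b ∈ insert g W := by
    intro g hgW
    have hnot := (locallyMaximalPF_iff.mp hS).2 g (fun hh => hgW ((hmem g).mpr hh))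
    rw [productFree_iff] at hnot
    push_neg at hnot
    obtain ⟨a, ha, b, hb, hab⟩ := hnot
    have conv : ∀ x, x ∈ insert g S → x ∈ insert g W := by
      intro x hx
      rcases Set.mem_insert_iff.mp hx with rfl | hx
      · exact Finset.mem_insert_self _ _
      · exact Finset.mem_insert_of_mem ((hmem x).mpr hx)
    exact ⟨a, conv a ha, b, conv b hb, conv _ hab⟩
  rcases h W with hbad | hbad | hok
  · exact absurd hc1 hbad
  · exact absurd hc2 hbad
  rcases hok g hg with hgW | ⟨a, ha, b, hb, rfl⟩
  · exact Or.inl ((hmem g).mp hgW)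
  · exact Or.inr (Set.mul_mem_mul ((hmem a).mp ha) ((hmem b).mp hb))

end Aux

/-- For `n ≥ 6`, the cyclic group of order `n` is not filled: the interval
`[a, 2a-1]` with `a = (n+6)/5` is locally maximal product-free but does not fill. -/
lemma not_filled_zmod (n : ℕ) (hn : 6 ≤ n) : ¬ Filled (Multiplicative (ZMod n)) := by
  haveI : NeZero n := ⟨by omega⟩
  set a : ℕ := (n + 6) / 5 with ha
  have hd := Nat.div_add_mod (n + 6) 5
  have hm : (n + 6) % 5 < 5 := Nat.mod_lt _ (by norm_num)
  have hub : n + 2 ≤ 5 * a := by omega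
  have hlb : 5 * a ≤ n + 6 := by omega
  have ha2 : 2 ≤ a := by omega
  have h3a : 3 * a ≤ n := by omega
  set S : Set (Multiplicative (ZMod n)) :=
    {x | a ≤ (Multiplicative.toAdd x).val ∧ (Multiplicative.toAdd x).val < 2 * a} with hSdef
  have hvlt : ∀ x : Multiplicative (ZMod n), (Multiplicative.toAdd x).val < n :=
    fun x => ZMod.val_lt _
  have hvcast : ∀ u : ℕ, u < n →
      (Multiplicative.toAdd (Multiplicative.ofAdd ((u : ℕ) : ZMod n))).val = u := by
    intro u hu
    simpa using ZMod.val_cast_of_lt hu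
  have hval_mul : ∀ x y : Multiplicative (ZMod n),
      (Multiplicative.toAdd (x * y)).val
        = ((Multiplicative.toAdd x).val + (Multiplicative.toAdd y).val) % n := by
    intro x y
    simp [ZMod.val_add]
  have hrep : ∀ x : Multiplicative (ZMod n),
      Multiplicative.ofAdd (((Multiplicative.toAdd x).val : ℕ) : ZMod n) = x := by
    intro x
    have := ZMod.natCast_rightInverse (n := n) (Multiplicative.toAdd x)
    simpa using congrArg Multiplicative.ofAdd this
  have hPF : ProductFree S := by
    rw [productFree_iff]
    intro x hx y hy hxy
    obtain ⟨hx1, hx2⟩ := hx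
    obtain ⟨hy1, hy2⟩ := hy
    obtain ⟨hz1, hz2⟩ := hxy
    rw [hval_mul] at hz1 hz2
    have hxlt := hvlt x
    have hylt := hvlt y
    rcases Nat.lt_or_ge ((Multiplicative.toAdd x).val + (Multiplicative.toAdd y).val) n with h | h
    · rw [Nat.mod_eq_of_lt h] at hz1 hz2; omega
    · rw [Nat.mod_eq_sub_mod h, Nat.mod_eq_of_lt (by omega)] at hz1 hz2; omega
  have hmax : ∀ g ∉ S, ¬ ProductFree (insert g S) := by
    intro g hg hbad
    rw [productFree_iff] at hbad
    set v : ℕ := (Multiplicative.toAdd g).val with hv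
    have hvn : v < n := hvlt g
    have hgS : ¬ (a ≤ v ∧ v < 2 * a) := hg
    obtain hc | hc | hc | hc :
        v = 0 ∨ (1 ≤ v ∧ v < a) ∨ (2 * a ≤ v ∧ v + 2 ≤ 4 * a ∧ v < n)
          ∨ (4 * a - 1 ≤ v ∧ v < n) := by omega
    · -- g = 1
      have hg1 : g = 1 := by
        have h0 : Multiplicative.toAdd g = 0 := by
          have := (ZMod.val_eq_zero (Multiplicative.toAdd g)).mp hc
          exact this
        have := congrArg Multiplicative.ofAdd h0
        simpa using this
      exact hbad g (Set.mem_insert _ _) g (Set.mem_insert _ _)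
        (by rw [hg1, one_mul]; exact Set.mem_insert _ _)
    · -- 1 ≤ v < a : g * (a : ZMod n) lands in S
      have hea : Multiplicative.ofAdd ((a : ℕ) : ZMod n) ∈ S := by
        constructor <;> rw [hvcast a (by omega)] <;> omega
      have hprodval :
          (Multiplicative.toAdd (g * Multiplicative.ofAdd ((a : ℕ) : ZMod n))).val = v + a := by
        rw [hval_mul, hvcast a (by omega), ← hv, Nat.mod_eq_of_lt (by omega)]
      have hprod : g * Multiplicative.ofAdd ((a : ℕ) : ZMod n) ∈ S := by
        constructor <;> rw [hprodval] <;> omega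
      exact hbad g (Set.mem_insert _ _) _ (Set.mem_insert_of_mem _ hea)
        (Set.mem_insert_of_mem _ hprod)
    · -- 2a ≤ v ≤ 4a-2 : g is a product of two elements of S
      obtain ⟨w, u, hw1, hw2, hu1, hu2, hwu⟩ :
          ∃ w u, a ≤ w ∧ w < 2 * a ∧ a ≤ u ∧ u < 2 * a ∧ w + u = v := by
        refine ⟨min (2 * a - 1) (v - a), v - min (2 * a - 1) (v - a), ?_, ?_, ?_, ?_, ?_⟩ <;>
          omega
      have hwS : Multiplicative.ofAdd ((w : ℕ) : ZMod n) ∈ S := by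
        constructor <;> rw [hvcast w (by omega)] <;> omega
      have huS : Multiplicative.ofAdd ((u : ℕ) : ZMod n) ∈ S := by
        constructor <;> rw [hvcast u (by omega)] <;> omega
      have hmul : Multiplicative.ofAdd ((w : ℕ) : ZMod n)
          * Multiplicative.ofAdd ((u : ℕ) : ZMod n) = g := by
        rw [← ofAdd_add, ← Nat.cast_add, hwu, hv]
        exact hrep g
      exact hbad _ (Set.mem_insert_of_mem _ hwS) _ (Set.mem_insert_of_mem _ huS)
        (by rw [hmul]; exact Set.mem_insert _ _)
    · -- 4a-1 ≤ v < n : g * u = a for suitable u ∈ S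
      obtain ⟨u, hu1, hu2, hu3⟩ : ∃ u, a ≤ u ∧ u < 2 * a ∧ v + u = n + a := by
        refine ⟨n + a - v, ?_, ?_, ?_⟩ <;> omega
      have huS : Multiplicative.ofAdd ((u : ℕ) : ZMod n) ∈ S := by
        constructor <;> rw [hvcast u (by omega)] <;> omega
      have hprodval :
          (Multiplicative.toAdd (g * Multiplicative.ofAdd ((u : ℕ) : ZMod n))).val = a := by
        rw [hval_mul, hvcast u (by omega), ← hv, hu3, Nat.add_mod_left, Nat.mod_eq_of_lt (by omega)]
      have hprod : g * Multiplicative.ofAdd ((u : ℕ) : ZMod n) ∈ S := by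
        constructor <;> rw [hprodval] <;> omega
      exact hbad g (Set.mem_insert _ _) _ (Set.mem_insert_of_mem _ huS)
        (Set.mem_insert_of_mem _ hprod)
  intro hF
  have hfills := hF S (locallyMaximalPF_iff.mpr ⟨hPF, hmax⟩)
  set g0 : Multiplicative (ZMod n) := Multiplicative.ofAdd (((a - 1 : ℕ)) : ZMod n) with hg0
  have hg0val : (Multiplicative.toAdd g0).val = a - 1 := hvcast (a - 1) (by omega)
  have hg01 : g0 ≠ 1 := by
    intro h
    have := congrArg (fun x => (Multiplicative.toAdd x).val) h
    simp only [hg0val] at this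
    simp at this
    omega
  rcases hfills g0 hg01 with h | h
  · obtain ⟨h1, h2⟩ := h
    rw [hg0val] at h1
    omega
  · rw [Set.mem_mul] at h
    obtain ⟨x, hx, y, hy, hxy⟩ := h
    obtain ⟨hx1, hx2⟩ := hx
    obtain ⟨hy1, hy2⟩ := hy
    have hxlt := hvlt x
    have hylt := hvlt y
    have hveq := congrArg (fun z => (Multiplicative.toAdd z).val) hxy
    simp only [hval_mul, hg0val] at hveq
    rcases Nat.lt_or_ge ((Multiplicative.toAdd x).val + (Multiplicative.toAdd y).val) n with h | h
    · rw [Nat.mod_eq_of_lt h] at hveq; omega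
    · rw [Nat.mod_eq_sub_mod h, Nat.mod_eq_of_lt (by omega)] at hveq; omega


section Decides

lemma filled_zmod3 : Filled (Multiplicative (ZMod 3)) := by
  apply filled_of_finset_check
  letI inst : DecidablePred (fun W : Finset (Multiplicative (ZMod 3)) =>
      (¬ ∀ a ∈ W, ∀ b ∈ W, a * b ∉ W) ∨
      (¬ ∀ g : Multiplicative (ZMod 3), g ∉ W →
          ∃ a ∈ insert g W, ∃ b ∈ insert g W, a * b ∈ insert g W) ∨
      ∀ g : Multiplicative (ZMod 3), g ≠ 1 → (g ∈ W ∨ ∃ a ∈ W, ∃ b ∈ W, a * b = g)) :=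
    fun W => inferInstance
  exact fun W => by revert W; decide

lemma filled_zmod5 : Filled (Multiplicative (ZMod 5)) := by
  apply filled_of_finset_check
  letI inst : DecidablePred (fun W : Finset (Multiplicative (ZMod 5)) =>
      (¬ ∀ a ∈ W, ∀ b ∈ W, a * b ∉ W) ∨
      (¬ ∀ g : Multiplicative (ZMod 5), g ∉ W →
          ∃ a ∈ insert g W, ∃ b ∈ insert g W, a * b ∈ insert g W) ∨
      ∀ g : Multiplicative (ZMod 5), g ≠ 1 → (g ∈ W ∨ ∃ a ∈ W, ∃ b ∈ W, a * b = g)) :=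
    fun W => inferInstance
  exact fun W => by revert W; decide

lemma not_filled_zmod4 : ¬ Filled (Multiplicative (ZMod 4)) := by
  apply not_filled_of_witness (W := {Multiplicative.ofAdd 2})
    (g0 := Multiplicative.ofAdd 1) <;> decide

lemma nf32 : ¬ Filled (Multiplicative (ZMod 3) × Multiplicative (ZMod 2)) := by
  apply not_filled_of_witness
    (W := {(Multiplicative.ofAdd 1, Multiplicative.ofAdd 0),
           (Multiplicative.ofAdd 0, Multiplicative.ofAdd 1)})
    (g0 := (Multiplicative.ofAdd 2, Multiplicative.ofAdd 1)) <;> decide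

lemma nf33 : ¬ Filled (Multiplicative (ZMod 3) × Multiplicative (ZMod 3)) := by
  apply not_filled_of_witness
    (W := {(Multiplicative.ofAdd 0, Multiplicative.ofAdd 1),
           (Multiplicative.ofAdd 1, Multiplicative.ofAdd 0),
           (Multiplicative.ofAdd 2, Multiplicative.ofAdd 2)})
    (g0 := (Multiplicative.ofAdd 1, Multiplicative.ofAdd 2)) <;> decide

lemma nf35 : ¬ Filled (Multiplicative (ZMod 3) × Multiplicative (ZMod 5)) := by
  apply not_filled_of_witness
    (W := {(Multiplicative.ofAdd 0, Multiplicative.ofAdd 1),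
           (Multiplicative.ofAdd 1, Multiplicative.ofAdd 2),
           (Multiplicative.ofAdd 2, Multiplicative.ofAdd 2)})
    (g0 := (Multiplicative.ofAdd 1, Multiplicative.ofAdd 0)) <;> decide

lemma nf52 : ¬ Filled (Multiplicative (ZMod 5) × Multiplicative (ZMod 2)) := by
  apply not_filled_of_witness
    (W := {(Multiplicative.ofAdd 1, Multiplicative.ofAdd 0),
           (Multiplicative.ofAdd 4, Multiplicative.ofAdd 0),
           (Multiplicative.ofAdd 0, Multiplicative.ofAdd 1)})
    (g0 := (Multiplicative.ofAdd 2, Multiplicative.ofAdd 1)) <;> decide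

lemma nf53 : ¬ Filled (Multiplicative (ZMod 5) × Multiplicative (ZMod 3)) := by
  apply not_filled_of_witness
    (W := {(Multiplicative.ofAdd 1, Multiplicative.ofAdd 0),
           (Multiplicative.ofAdd 2, Multiplicative.ofAdd 1),
           (Multiplicative.ofAdd 2, Multiplicative.ofAdd 2)})
    (g0 := (Multiplicative.ofAdd 0, Multiplicative.ofAdd 1)) <;> decide

lemma nf55 : ¬ Filled (Multiplicative (ZMod 5) × Multiplicative (ZMod 5)) := by
  apply not_filled_of_witness
    (W := {(Multiplicative.ofAdd 0, Multiplicative.ofAdd 1),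
           (Multiplicative.ofAdd 0, Multiplicative.ofAdd 4),
           (Multiplicative.ofAdd 1, Multiplicative.ofAdd 0),
           (Multiplicative.ofAdd 1, Multiplicative.ofAdd 2),
           (Multiplicative.ofAdd 3, Multiplicative.ofAdd 3)})
    (g0 := (Multiplicative.ofAdd 3, Multiplicative.ofAdd 0)) <;> decide

end Decides

lemma filled_of_sq {G : Type*} [Group G] (h2 : ∀ g : G, g ^ 2 = 1) : Filled G := by
  intro S hS g hg
  by_contra hgU
  have hgS : g ∉ S := fun h => hgU (Or.inl h)
  have hgSS : g ∉ S * S := fun h => hgU (Or.inr h)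
  have h1S : (1 : G) ∉ S := one_not_mem_of_productFree hS.1
  have hsq : ∀ x : G, x * x = 1 := fun x => by have := h2 x; rwa [pow_two] at this
  apply (locallyMaximalPF_iff.mp hS).2 g hgS
  rw [productFree_iff]
  intro x hx y hy hxy
  rcases Set.mem_insert_iff.mp hx with hxg | hxS
  · rcases Set.mem_insert_iff.mp hy with hyg | hyS
    · rw [hxg, hyg, hsq g] at hxy
      rcases Set.mem_insert_iff.mp hxy with h | h
      · exact hg h.symm
      · exact h1S h
    · rw [hxg] at hxy
      rcases Set.mem_insert_iff.mp hxy with h | h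
      · have hy1 : y = 1 := mul_eq_left.mp h
        rw [hy1] at hyS
        exact h1S hyS
      · apply hgSS
        have hgy : (g * y) * y = g := by rw [mul_assoc, hsq y, mul_one]
        rw [← hgy]
        exact Set.mul_mem_mul h hyS
  · rcases Set.mem_insert_iff.mp hy with hyg | hyS
    · rw [hyg] at hxy
      rcases Set.mem_insert_iff.mp hxy with h | h
      · have hx1 : x = 1 := mul_eq_right.mp h
        rw [hx1] at hxS
        exact h1S hxS
      · apply hgSS
        have hxg' : x * (x * g) = g := by rw [← mul_assoc, hsq x, one_mul]
        rw [← hxg']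
        exact Set.mul_mem_mul hxS h
    · rcases Set.mem_insert_iff.mp hxy with h | h
      · apply hgSS
        rw [← h]
        exact Set.mul_mem_mul hxS hyS
      · exact productFree_iff.mp hS.1 x hxS y hyS h

theorem abelian_filled_iff {G : Type*} [CommGroup G] [Finite G] :
    Filled G ↔
      (IsCyclic G ∧ Nat.card G = 3) ∨ (IsCyclic G ∧ Nat.card G = 5) ∨
        (∀ g : G, g ^ 2 = 1) := by
  haveI hp3 : Fact (Nat.Prime 3) := ⟨by norm_num⟩
  haveI hp5 : Fact (Nat.Prime 5) := ⟨by norm_num⟩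
  constructor
  · intro hF
    obtain ⟨ι, hι, nn, hlt, ⟨e⟩⟩ := CommGroup.equiv_prod_multiplicative_zmod_of_finite G
    haveI := hι
    letI : DecidableEq ι := Classical.decEq ι
    have hfac : ∀ i, Filled (Multiplicative (ZMod (nn i))) := by
      intro i
      refine filled_of_surjective ((Pi.evalMonoidHom _ i).comp e.toMonoidHom) ?_ hF
      rw [MonoidHom.coe_comp]
      exact (Function.surjective_eval i).comp e.surjective
    have hni : ∀ i, nn i = 2 ∨ nn i = 3 ∨ nn i = 5 := by
      intro i
      by_contra hcon
      push_neg at hcon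
      have h1 := hlt i
      have h46 : nn i = 4 ∨ 6 ≤ nn i := by omega
      rcases h46 with h4 | h6
      · have hp := hfac i
        rw [h4] at hp
        exact not_filled_zmod4 hp
      · exact not_filled_zmod _ h6 (hfac i)
    have hpairF : ∀ i j, i ≠ j →
        Filled (Multiplicative (ZMod (nn i)) × Multiplicative (ZMod (nn j))) := by
      intro i j hij
      refine filled_of_surjective
        (((Pi.evalMonoidHom _ i).prod (Pi.evalMonoidHom _ j)).comp e.toMonoidHom) ?_ hF
      rw [MonoidHom.coe_comp]
      refine Function.Surjective.comp ?_ e.surjective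
      rintro ⟨x, y⟩
      refine ⟨Function.update (Function.update
        (1 : ∀ k, Multiplicative (ZMod (nn k))) i x) j y, ?_⟩
      have hxi : Function.update (Function.update
          (1 : ∀ k, Multiplicative (ZMod (nn k))) i x) j y i = x := by
        rw [Function.update_of_ne hij, Function.update_self]
      have hyj : Function.update (Function.update
          (1 : ∀ k, Multiplicative (ZMod (nn k))) i x) j y j = y :=
        Function.update_self _ _ _
      simp only [MonoidHom.prod_apply, Pi.evalMonoidHom_apply, Function.eval, hxi, hyj]
    have hpair2 : ∀ i j, i ≠ j → nn i = 2 := by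
      intro i j hij
      by_contra hi2
      have hp := hpairF i j hij
      rcases hni i with h | h | h
      · exact hi2 h
      · rcases hni j with h' | h' | h'
        · rw [h, h'] at hp; exact nf32 hp
        · rw [h, h'] at hp; exact nf33 hp
        · rw [h, h'] at hp; exact nf35 hp
      · rcases hni j with h' | h' | h'
        · rw [h, h'] at hp; exact nf52 hp
        · rw [h, h'] at hp; exact nf53 hp
        · rw [h, h'] at hp; exact nf55 hp
    have hcardfac : ∀ m : ℕ, Nat.card (Multiplicative (ZMod m)) = m := by
      intro m
      rw [Nat.card_congr Multiplicative.toAdd, Nat.card_zmod]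
    by_cases hex : ∃ i, nn i ≠ 2
    · obtain ⟨i0, hi0⟩ := hex
      have honly : ∀ j, j = i0 := by
        intro j
        by_contra hne
        exact hi0 (hpair2 i0 j (fun h => hne h.symm))
      have hcard : Nat.card G = nn i0 := by
        have h1 : Nat.card G = ∏ i, Nat.card (Multiplicative (ZMod (nn i))) := by
          rw [Nat.card_congr e.toEquiv, Nat.card_pi]
        rw [h1, Finset.prod_eq_single_of_mem i0 (Finset.mem_univ _)
          (fun b _ hb => absurd (honly b) hb), hcardfac]
      rcases hni i0 with h | h | h
      · exact absurd h hi0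
      · exact Or.inl ⟨isCyclic_of_prime_card (p := 3) (hcard.trans h), hcard.trans h⟩
      · exact Or.inr (Or.inl ⟨isCyclic_of_prime_card (p := 5) (hcard.trans h), hcard.trans h⟩)
    · push_neg at hex
      refine Or.inr (Or.inr ?_)
      intro g
      apply e.injective
      rw [map_pow, map_one]
      funext i
      have key : ∀ m : ℕ, m = 2 → ∀ x : Multiplicative (ZMod m), x ^ 2 = 1 := by
        rintro m rfl
        decide
      have := key (nn i) (hex i) (e g i)
      simpa using this
  · rintro (⟨hc, hcard⟩ | ⟨hc, hcard⟩ | h2)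
    · have e := zmodCyclicMulEquiv hc
      rw [hcard] at e
      exact filled_of_surjective e.toMonoidHom e.surjective filled_zmod3
    · have e := zmodCyclicMulEquiv hc
      rw [hcard] at e
      exact filled_of_surjective e.toMonoidHom e.surjective filled_zmod5
    · exact filled_of_sq h2
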